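/- Let u ∈ {i, j, k} and let q be an integer quaternion such that q u conj(q) is primitive (its four integer coefficients have greatest common divisor 1). Then there exist integer quaternions q₁, q₂ such that q₁ q + q₂ q u = 2. -/

import Mathlib

open Quaternion

private lemma pure_mul_add_mul_pure (w P : ℍ[ℤ]) (hw : w.re = 0) (hP : P.re = 0) :
    w * P + P * w = ((-2 * (w.imI * P.imI + w.imJ * P.imJ + w.imK * P.imK) : ℤ) : ℍ[ℤ]) := by
  ext <;>
    simp only [Quaternion.re_add, Quaternion.imI_add, Quaternion.imJ_add, Quaternion.imK_add,
      Quaternion.re_mul, Quaternion.imI_mul, Quaternion.imJ_mul, Quaternion.imK_mul,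
      Quaternion.re_intCast, Quaternion.imI_intCast, Quaternion.imJ_intCast,
      Quaternion.imK_intCast, Int.cast_id, hw, hP] <;>
    ring

private lemma int_quat_cancel (n : ℤ) (hn : n ≠ 0) (a b : ℍ[ℤ])
    (h : (n : ℍ[ℤ]) * a = (n : ℍ[ℤ]) * b) : a = b := by
  have h1 := congrArg QuaternionAlgebra.re h
  have h2 := congrArg QuaternionAlgebra.imI h
  have h3 := congrArg QuaternionAlgebra.imJ h
  have h4 := congrArg QuaternionAlgebra.imK h
  simp only [Quaternion.re_mul, Quaternion.imI_mul, Quaternion.imJ_mul, Quaternion.imK_mul,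
    Quaternion.re_intCast, Quaternion.imI_intCast, Quaternion.imJ_intCast, Quaternion.imK_intCast, Int.cast_id,
    zero_mul, mul_zero, sub_zero, add_zero, zero_add, zero_sub, neg_zero, neg_neg] at h1 h2 h3 h4
  ext
  · exact mul_left_cancel₀ hn h1
  · exact mul_left_cancel₀ hn h2
  · exact mul_left_cancel₀ hn h3
  · exact mul_left_cancel₀ hn h4

private lemma star_mul_self_int (q : ℍ[ℤ]) : star q * q = ((normSq q : ℤ) : ℍ[ℤ]) := by
  ext <;>
    simp only [Quaternion.re_mul, Quaternion.imI_mul, Quaternion.imJ_mul, Quaternion.imK_mul,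
      Quaternion.re_star, Quaternion.imI_star, Quaternion.imJ_star, Quaternion.imK_star,
      Quaternion.re_intCast, Quaternion.imI_intCast, Quaternion.imJ_intCast,
      Quaternion.imK_intCast, Int.cast_id, Quaternion.normSq_def'] <;>
    ring

/-- An integer quaternion is primitive if no integer `m > 1` divides all four of
its coefficients. -/
def QuatPrimitive (q : ℍ[ℤ]) : Prop :=
  ∀ m : ℤ, 1 < m → ¬(m ∣ q.re ∧ m ∣ q.imI ∧ m ∣ q.imJ ∧ m ∣ q.imK)

/-- If `u ∈ {i, j, k}` and `q u conj q` is primitive, then there are integer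
quaternions `q₁, q₂` with `q₁ q + q₂ q u = 2`. -/
theorem quat_bezout (u q : ℍ[ℤ])
    (hu : u = ⟨0, 1, 0, 0⟩ ∨ u = ⟨0, 0, 1, 0⟩ ∨ u = ⟨0, 0, 0, 1⟩)
    (hprim : QuatPrimitive (q * u * star q)) :
    ∃ q₁ q₂ : ℍ[ℤ], q₁ * q + q₂ * q * u = 2 := by
  set P : ℍ[ℤ] := q * u * star q with hPdef
  have hu' : star u = -u := by
    rcases hu with h | h | h <;> subst h <;> rfl
  have hPstar : star P = -P := by
    rw [hPdef, star_mul, star_mul, star_star, hu']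
    noncomm_ring
  have hPre : P.re = 0 := by
    have h := congrArg QuaternionAlgebra.re hPstar
    simp at h
    linarith
  have d1 : ((Int.gcd (Int.gcd P.imI P.imJ) P.imK : ℕ) : ℤ) ∣ ((Int.gcd P.imI P.imJ : ℕ) : ℤ) :=
    Int.gcd_dvd_left _ _
  have d3 : ((Int.gcd (Int.gcd P.imI P.imJ) P.imK : ℕ) : ℤ) ∣ P.imK := Int.gcd_dvd_right _ _
  have dx : ((Int.gcd (Int.gcd P.imI P.imJ) P.imK : ℕ) : ℤ) ∣ P.imI :=
    d1.trans (Int.gcd_dvd_left _ _)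
  have dy : ((Int.gcd (Int.gcd P.imI P.imJ) P.imK : ℕ) : ℤ) ∣ P.imJ :=
    d1.trans (Int.gcd_dvd_right _ _)
  have hg : Int.gcd (Int.gcd P.imI P.imJ) P.imK = 1 := by
    rcases Nat.lt_or_ge (Int.gcd (Int.gcd P.imI P.imJ) P.imK) 2 with h2 | h2
    · interval_cases hgv : Int.gcd (Int.gcd P.imI P.imJ) P.imK
      · exfalso
        obtain ⟨hxy, hz⟩ := Int.gcd_eq_zero_iff.mp hgv
        obtain ⟨hx0, hy0⟩ := Int.gcd_eq_zero_iff.mp (by exact_mod_cast hxy)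
        refine hprim 2 one_lt_two ⟨?_, ?_, ?_, ?_⟩
        · rw [hPre]; exact dvd_zero 2
        · rw [hx0]; exact dvd_zero 2
        · rw [hy0]; exact dvd_zero 2
        · rw [hz]; exact dvd_zero 2
      · rfl
    · exfalso
      refine hprim (Int.gcd (Int.gcd P.imI P.imJ) P.imK : ℤ) (by exact_mod_cast h2)
        ⟨?_, dx, dy, d3⟩
      rw [hPre]; exact dvd_zero _
  obtain ⟨α, β, γ, hbez⟩ : ∃ α β γ : ℤ, α * P.imI + β * P.imJ + γ * P.imK = 1 := by
    have h1 := Int.gcd_eq_gcd_ab ((Int.gcd P.imI P.imJ : ℕ) : ℤ) P.imK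
    have h2 := Int.gcd_eq_gcd_ab P.imI P.imJ
    rw [hg] at h1
    refine ⟨Int.gcdA P.imI P.imJ * Int.gcdA ((Int.gcd P.imI P.imJ : ℕ) : ℤ) P.imK,
      Int.gcdB P.imI P.imJ * Int.gcdA ((Int.gcd P.imI P.imJ : ℕ) : ℤ) P.imK,
      Int.gcdB ((Int.gcd P.imI P.imJ : ℕ) : ℤ) P.imK, ?_⟩
    push_cast at h1
    linear_combination (-(Int.gcdA ((Int.gcd P.imI P.imJ : ℕ) : ℤ) P.imK)) * h2 - h1
  set w : ℍ[ℤ] := ⟨0, α, β, γ⟩ with hwdef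
  have hw : w * P + P * w = (-2 : ℍ[ℤ]) := by
    have h := pure_mul_add_mul_pure w P rfl hPre
    rw [show w.imI = α from rfl, show w.imJ = β from rfl, show w.imK = γ from rfl, hbez] at h
    rw [h]
    norm_num
  have hq0 : q ≠ 0 := by
    intro h
    rw [show P = q * u * star q from hPdef, h] at hg
    simp at hg
  have hn0 : normSq q ≠ 0 := fun h => hq0 (normSq_eq_zero.mp h)
  have hnq : star q * q = ((normSq q : ℤ) : ℍ[ℤ]) := star_mul_self_int q
  have e1 : P * q = ((normSq q : ℤ) : ℍ[ℤ]) * (q * u) := by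
    calc P * q = q * u * (star q * q) := by rw [hPdef]; noncomm_ring
    _ = q * u * ((normSq q : ℤ) : ℍ[ℤ]) := by rw [hnq]
    _ = ((normSq q : ℤ) : ℍ[ℤ]) * (q * u) := ((Int.cast_commute (normSq q) (q * u)).eq).symm
  have e2 : star q * P = ((normSq q : ℤ) : ℍ[ℤ]) * (u * star q) := by
    calc star q * P = (star q * q) * (u * star q) := by rw [hPdef]; noncomm_ring
    _ = ((normSq q : ℤ) : ℍ[ℤ]) * (u * star q) := by rw [hnq]
  have hwP : w * P = (-2 : ℍ[ℤ]) - P * w := by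
    rw [eq_sub_iff_add_eq]; exact hw
  have key : ((normSq q : ℤ) : ℍ[ℤ]) * (-(u * star q * w)) + (-(star q * w)) * P
      = 2 * star q := by
    calc ((normSq q : ℤ) : ℍ[ℤ]) * (-(u * star q * w)) + (-(star q * w)) * P
        = -(((normSq q : ℤ) : ℍ[ℤ]) * (u * star q) * w) - star q * (w * P) := by noncomm_ring
      _ = -(((normSq q : ℤ) : ℍ[ℤ]) * (u * star q) * w)
            - star q * ((-2 : ℍ[ℤ]) - P * w) := by rw [hwP]
      _ = -(((normSq q : ℤ) : ℍ[ℤ]) * (u * star q) * w) - star q * (-2 : ℍ[ℤ])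
            + (star q * P) * w := by noncomm_ring
      _ = -(((normSq q : ℤ) : ℍ[ℤ]) * (u * star q) * w) - star q * (-2 : ℍ[ℤ])
            + ((normSq q : ℤ) : ℍ[ℤ]) * (u * star q) * w := by rw [e2]
      _ = 2 * star q := by noncomm_ring
  have main : ((normSq q : ℤ) : ℍ[ℤ]) * ((-(u * star q * w)) * q + (-(star q * w)) * (q * u))
      = ((normSq q : ℤ) : ℍ[ℤ]) * 2 := by
    calc ((normSq q : ℤ) : ℍ[ℤ]) * ((-(u * star q * w)) * q + (-(star q * w)) * (q * u))
        = (((normSq q : ℤ) : ℍ[ℤ]) * (-(u * star q * w))) * q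
            + (((normSq q : ℤ) : ℍ[ℤ]) * (-(star q * w))) * (q * u) := by noncomm_ring
      _ = (((normSq q : ℤ) : ℍ[ℤ]) * (-(u * star q * w))) * q
            + ((-(star q * w)) * ((normSq q : ℤ) : ℍ[ℤ])) * (q * u) := by
          rw [(Int.cast_commute (normSq q) (-(star q * w))).eq]
      _ = (((normSq q : ℤ) : ℍ[ℤ]) * (-(u * star q * w))) * q
            + (-(star q * w)) * (((normSq q : ℤ) : ℍ[ℤ]) * (q * u)) := by noncomm_ring
      _ = (((normSq q : ℤ) : ℍ[ℤ]) * (-(u * star q * w))) * q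
            + (-(star q * w)) * (P * q) := by rw [e1]
      _ = (((normSq q : ℤ) : ℍ[ℤ]) * (-(u * star q * w)) + (-(star q * w)) * P) * q := by
          noncomm_ring
      _ = (2 * star q) * q := by rw [key]
      _ = 2 * (star q * q) := by noncomm_ring
      _ = 2 * ((normSq q : ℤ) : ℍ[ℤ]) := by rw [hnq]
      _ = ((normSq q : ℤ) : ℍ[ℤ]) * 2 := ((Int.cast_commute (normSq q) (2 : ℍ[ℤ])).eq).symm
  refine ⟨-(u * star q * w), -(star q * w), ?_⟩
  have cancel := int_quat_cancel (normSq q) hn0 _ _ main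
  rw [mul_assoc, mul_assoc]
  rw [mul_assoc] at cancel
  exact cancel
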